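/- Let d, r, n be positive integers and c = c(d, r) a real number. Suppose that every real multilinear polynomial of degree at most d in n variables with at least r pairwise-disjoint non-zero monomials of degree exactly d has at most c·2^n zeros in {0,1}^n. Let G be an Abelian group in which every non-zero element has order greater than (C(rd, ≤d))!, where C(rd, ≤d) = Σ_{i≤d} C(rd, i). Then every degree-≤d polynomial Q over G (in n variables) with at least r pairwise-disjoint non-zero degree-d monomials has at most c·2^n zeros in {0,1}^n. -/

import Mathlib

open Finset
open scoped Classical

universe u

/-- Evaluation of a multilinear polynomial with coefficients `c` over an Abelian
group at a point of the Boolean cube. -/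
def evalPoly {G : Type*} [AddCommMonoid G] {n : ℕ} (c : Finset (Fin n) → G)
    (x : Fin n → Bool) : G :=
  ∑ S : Finset (Fin n), if ∀ i ∈ S, x i = true then c S else 0

open Matrix

lemma det01_bound {s : Type*} [Fintype s] [DecidableEq s] (A : Matrix s s ℤ)
    (h : ∀ i j, A i j = 0 ∨ A i j = 1) : |A.det| ≤ (Nat.factorial (Fintype.card s) : ℤ) := by
  rw [Matrix.det_apply]
  calc |∑ σ : Equiv.Perm s, Equiv.Perm.sign σ • ∏ i, A (σ i) i|
      ≤ ∑ σ : Equiv.Perm s, |Equiv.Perm.sign σ • ∏ i, A (σ i) i| :=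
        Finset.abs_sum_le_sum_abs _ _
    _ ≤ ∑ _σ : Equiv.Perm s, 1 := by
        refine Finset.sum_le_sum fun σ _ => ?_
        have h1 : |(Equiv.Perm.sign σ : ℤ)| = 1 := by
          rcases Int.units_eq_one_or (Equiv.Perm.sign σ) with h' | h' <;> simp [h']
        rw [Units.smul_def, smul_eq_mul, abs_mul, h1, one_mul, Finset.abs_prod]
        refine Finset.prod_le_one (fun i _ => abs_nonneg _) (fun i _ => ?_)
        rcases h (σ i) i with h' | h' <;> simp [h']
    _ = (Nat.factorial (Fintype.card s) : ℤ) := by simp [Fintype.card_perm]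

lemma int_combination {ι κ : Type*} [Fintype ι] [Fintype κ]
    (u : κ → ι → ℤ) (h01 : ∀ k i, u k i = 0 ∨ u k i = 1) (e : ι → ℤ)
    (he : (fun i => (e i : ℝ)) ∈ Submodule.span ℝ (Set.range fun k => fun i => (u k i : ℝ))) :
    ∃ (N : ℕ) (m : κ → ℤ), 0 < N ∧ N ≤ Nat.factorial (Fintype.card ι) ∧
      ∀ i, ∑ k, m k * u k i = (N : ℤ) * e i := by
  classical
  set uQ : κ → ι → ℚ := fun k i => (u k i : ℚ) with huQ
  set eQ : ι → ℚ := fun i => (e i : ℚ) with heQdef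
  -- Step 1: rational span membership
  have heQ : eQ ∈ Submodule.span ℚ (Set.range uQ) := by
    by_contra hmem
    obtain ⟨f, hf0, hfmap⟩ := Submodule.exists_dual_map_eq_bot_of_notMem hmem inferInstance
    have hker : ∀ v ∈ Submodule.span ℚ (Set.range uQ), f v = 0 := by
      intro v hv
      have hmem2 : f v ∈ (Submodule.span ℚ (Set.range uQ)).map f := ⟨v, hv, rfl⟩
      rw [hfmap] at hmem2; exact (Submodule.mem_bot ℚ).mp hmem2
    have hfv : ∀ v : ι → ℚ, f v = ∑ i, v i * f (Pi.single i 1) := by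
      intro v
      conv_lhs => rw [← Finset.univ_sum_single v]
      rw [map_sum]
      refine Finset.sum_congr rfl fun i _ => ?_
      have h1 : (Pi.single i (v i) : ι → ℚ) = v i • (Pi.single i 1 : ι → ℚ) := by
        rw [← Pi.single_smul' i (v i) (1:ℚ), smul_eq_mul, mul_one]
      rw [h1, _root_.map_smul, smul_eq_mul]
    set w : ι → ℚ := fun i => f (Pi.single i 1) with hw
    set g : (ι → ℝ) →ₗ[ℝ] ℝ := ∑ i, (w i : ℝ) • (LinearMap.proj i) with hgdef
    have hg : ∀ v : ι → ℝ, g v = ∑ i, v i * (w i : ℝ) := by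
      intro v
      simp [hgdef, LinearMap.proj_apply, mul_comm]
    have hgu : ∀ k, g (fun i => (u k i : ℝ)) = 0 := by
      intro k
      have h2 : f (uQ k) = 0 := hker _ (Submodule.subset_span ⟨k, rfl⟩)
      rw [hfv] at h2
      have h3 : ((∑ i, uQ k i * w i : ℚ) : ℝ) = 0 := by rw [h2]; simp
      rw [hg]
      push_cast at h3
      convert h3 using 1; simp [huQ]
    have hspan : Submodule.span ℝ (Set.range fun k => fun i => (u k i : ℝ)) ≤
        LinearMap.ker g := by
      rw [Submodule.span_le]
      rintro - ⟨k, rfl⟩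
      exact hgu k
    have hge : g (fun i => (e i : ℝ)) = 0 := hspan he
    rw [hg] at hge
    have h4 : ((∑ i, eQ i * w i : ℚ) : ℝ) = 0 := by push_cast; convert hge using 1; simp [heQdef]
    have h5 : (∑ i, eQ i * w i : ℚ) = 0 := by exact_mod_cast h4
    rw [← hfv] at h5
    exact hf0 h5
  -- Step 2: basis extraction
  obtain ⟨T, hTsub, hTspan, hTind⟩ := exists_linearIndependent ℚ (Set.range uQ)
  have hTfin : T.Finite := (Set.finite_range uQ).subset hTsub
  haveI : Fintype T := hTfin.fintype
  have heT : eQ ∈ Submodule.span ℚ (Set.range ((↑) : T → (ι → ℚ))) := by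
    rw [Subtype.range_coe, hTspan]; exact heQ
  obtain ⟨α, hα⟩ := (Submodule.mem_span_range_iff_exists_fun ℚ).mp heT
  -- Step 3: card bound
  have hcardT : Fintype.card T ≤ Fintype.card ι := by
    have h6 := hTind.fintype_card_le_finrank
    simpa [Module.finrank_pi] using h6
  -- Step 4: row space
  set rowvec : ι → (↥T → ℚ) := fun i j => (j : ι → ℚ) i with hrowvec
  have hArank : Module.finrank ℚ (Submodule.span ℚ (Set.range rowvec)) = Fintype.card T := by
    set A : Matrix ↥T ι ℚ := fun j => (j : ι → ℚ) with hA
    have h1 : A.rank = Fintype.card T := LinearIndependent.rank_matrix hTind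
    have h2 : A.rank = Module.finrank ℚ (Submodule.span ℚ (Set.range Aᵀ)) :=
      Matrix.rank_eq_finrank_span_cols A
    have h3 : Aᵀ = rowvec := rfl
    rw [h3] at h2
    rw [← h2]; exact h1
  obtain ⟨b, hbsub, hbspan, hbind⟩ := exists_linearIndependent ℚ (Set.range rowvec)
  have hbfin : b.Finite := (Set.finite_range rowvec).subset hbsub
  haveI : Fintype b := hbfin.fintype
  have hbcard : Fintype.card b = Fintype.card T := by
    have h1 : Module.finrank ℚ (Submodule.span ℚ b) = Fintype.card b := by
      rw [finrank_span_set_eq_card hbind, Set.toFinset_card]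
    rw [← h1, hbspan, hArank]
  have hpos : ∀ v : b, ∃ i : ι, rowvec i = (v : ↥T → ℚ) := fun v => hbsub v.2
  choose pos hposspec using hpos
  set eqv : ↥T ≃ ↥b := (Fintype.equivOfCardEq hbcard).symm with heqv
  set Bq : Matrix ↥T ↥T ℚ := fun a j => (eqv a : ↥T → ℚ) j with hBq
  have hBrows : LinearIndependent ℚ (fun a : T => Bq a) := by
    have h1 : (fun a : T => Bq a) = (fun v : b => (v : ↥T → ℚ)) ∘ eqv := rfl
    rw [h1]; exact hbind.comp eqv eqv.injective
  have hBunit : IsUnit Bq := Matrix.linearIndependent_rows_iff_isUnit.mp hBrows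
  have hmulvec : Bq *ᵥ α = fun a => eQ (pos (eqv a)) := by
    funext a
    have h1 : (eqv a : ↥T → ℚ) = rowvec (pos (eqv a)) := (hposspec (eqv a)).symm
    have h2 := congrFun hα (pos (eqv a))
    simp only [Matrix.mulVec, dotProduct]
    rw [← h2]
    simp only [Finset.sum_apply, Pi.smul_apply, smul_eq_mul]
    refine Finset.sum_congr rfl fun j _ => ?_
    rw [show Bq a j = (eqv a : ↥T → ℚ) j from rfl, h1]
    simp [hrowvec, mul_comm]
  have hB01 : ∀ a j, Bq a j = 0 ∨ Bq a j = 1 := by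
    intro a j
    obtain ⟨k, hk⟩ := hTsub j.2
    have h1 : Bq a j = uQ k (pos (eqv a)) := by
      rw [show Bq a j = (eqv a : ↥T → ℚ) j from rfl, ← hposspec (eqv a)]
      simp [hrowvec, ← hk]
    rw [h1]
    rcases h01 k (pos (eqv a)) with h' | h' <;> simp [huQ, h']
  set Bz : Matrix ↥T ↥T ℤ := fun a j => if Bq a j = 1 then 1 else 0 with hBz
  have hBzmap : Bz.map (Int.cast : ℤ → ℚ) = Bq := by
    funext a j
    rcases hB01 a j with h' | h' <;> simp only [Matrix.map_apply] <;> simp [hBz, h']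
  set detz : ℤ := Bz.det with hdetz
  have hdetcast : ((detz : ℚ)) = Bq.det := by
    rw [← hBzmap]
    have h := RingHom.map_det (Int.castRingHom ℚ) Bz
    simp only [RingHom.mapMatrix_apply, Int.coe_castRingHom] at h
    exact h
  have hdetne : Bq.det ≠ 0 := by
    have := hBunit
    rw [Matrix.isUnit_iff_isUnit_det] at this
    exact this.ne_zero
  have hdetzne : detz ≠ 0 := by
    intro h'; rw [h'] at hdetcast; exact hdetne (by exact_mod_cast hdetcast.symm)
  have hdetbound : |detz| ≤ (Nat.factorial (Fintype.card ι) : ℤ) := by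
    refine le_trans (det01_bound Bz ?_) ?_
    · intro a j; rcases hB01 a j with h' | h' <;> simp [hBz, h']
    · exact_mod_cast Nat.factorial_le hcardT
  set bz : T → ℤ := fun a => e (pos (eqv a)) with hbz
  set m' : T → ℤ := Matrix.cramer Bz bz with hm'
  have hcr : Bz *ᵥ m' = detz • bz := Matrix.mulVec_cramer Bz bz
  -- cast Cramer identity to ℚ and use injectivity
  have hcastmv : Bq *ᵥ (fun j => (m' j : ℚ)) = Bq *ᵥ ((detz : ℚ) • α) := by
    funext a
    have h1 := congrFun hcr a
    simp only [Matrix.mulVec, dotProduct, Pi.smul_apply, smul_eq_mul] at h1 ⊢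
    have h2 : ((∑ j, Bz a j * m' j : ℤ) : ℚ) = ((detz * bz a : ℤ) : ℚ) := by
      rw [h1]
    push_cast at h2
    have h3 : ∀ j, ((Bz a j : ℚ)) = Bq a j := fun j => by
      rw [← hBzmap]; rfl
    calc ∑ j, Bq a j * (m' j : ℚ) = ∑ j, ((Bz a j : ℚ)) * (m' j : ℚ) := by
          refine Finset.sum_congr rfl fun j _ => by rw [h3]
      _ = (detz : ℚ) * (bz a : ℚ) := h2
      _ = ∑ j, Bq a j * ((detz : ℚ) * α j) := by
          have h4 := congrFun hmulvec a
          simp only [Matrix.mulVec, dotProduct] at h4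
          rw [show ((bz a : ℚ)) = eQ (pos (eqv a)) from by simp [hbz, heQdef], ← h4,
            Finset.mul_sum]
          refine Finset.sum_congr rfl fun j _ => by ring
  have hinj : Function.Injective (Bq.mulVec) := Matrix.mulVec_injective_iff_isUnit.mpr hBunit
  have hm'cast : (fun j => (m' j : ℚ)) = (detz : ℚ) • α := hinj hcastmv
  -- final rational identity
  have hfinalQ : ∀ i, ∑ j : T, (m' j : ℚ) * (j : ι → ℚ) i = (detz : ℚ) * eQ i := by
    intro i
    have h1 := congrFun hα i
    simp only [Finset.sum_apply, Pi.smul_apply, smul_eq_mul] at h1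
    calc ∑ j : T, (m' j : ℚ) * (j : ι → ℚ) i
        = ∑ j : T, (detz : ℚ) * (α j * (j : ι → ℚ) i) := by
          refine Finset.sum_congr rfl fun j _ => ?_
          have := congrFun hm'cast j
          simp only [Pi.smul_apply, smul_eq_mul] at this
          rw [this]; ring
      _ = (detz : ℚ) * ∑ j : T, α j * (j : ι → ℚ) i := by rw [Finset.mul_sum]
      _ = (detz : ℚ) * eQ i := by rw [h1]
  -- transfer to κ-indexed coefficients
  have hkk : ∀ j : T, ∃ k : κ, uQ k = (j : ι → ℚ) := fun j => hTsub j.2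
  choose kk hkkspec using hkk
  set ε : ℤ := if detz < 0 then -1 else 1 with hε
  set N : ℕ := detz.natAbs with hN
  refine ⟨N, fun k => ε * ∑ j ∈ Finset.univ.filter (fun j : T => kk j = k), m' j, ?_, ?_, ?_⟩
  · exact Int.natAbs_pos.mpr hdetzne
  · have : (N : ℤ) ≤ (Nat.factorial (Fintype.card ι) : ℤ) := by
      rw [hN, ← Int.abs_eq_natAbs]; exact hdetbound
    exact_mod_cast this
  · intro i
    have hsum : ∑ k, (∑ j ∈ Finset.univ.filter (fun j : T => kk j = k), m' j) * u k i
        = ∑ j : T, m' j * u (kk j) i := by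
      rw [← Finset.sum_fiberwise Finset.univ (fun j : T => kk j) (fun j => m' j * u (kk j) i)]
      refine Finset.sum_congr rfl fun k _ => ?_
      rw [Finset.sum_mul]
      refine Finset.sum_congr rfl fun j hj => ?_
      rw [Finset.mem_filter] at hj
      rw [hj.2]
    have hZint : ∑ j : T, m' j * u (kk j) i = detz * e i := by
      have hQ : ((∑ j : T, m' j * u (kk j) i : ℤ) : ℚ) = ((detz * e i : ℤ) : ℚ) := by
        push_cast
        rw [← hfinalQ i]
        refine Finset.sum_congr rfl fun j _ => ?_
        have := congrFun (hkkspec j) i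
        rw [huQ] at this
        simp only at this
        rw [← this]
      exact_mod_cast hQ
    have hεdet : ε * detz = (N : ℤ) := by
      simp only [hN, hε]
      rcases lt_or_ge detz 0 with h' | h'
      · rw [if_pos h']; omega
      · rw [if_neg (not_lt.mpr h')]; omega
    calc ∑ k, (ε * ∑ j ∈ Finset.univ.filter (fun j : T => kk j = k), m' j) * u k i
        = ε * ∑ k, (∑ j ∈ Finset.univ.filter (fun j : T => kk j = k), m' j) * u k i := by
          rw [Finset.mul_sum]; refine Finset.sum_congr rfl fun k _ => by ring
      _ = ε * (detz * e i) := by rw [hsum, hZint]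
      _ = (N : ℤ) * e i := by rw [← hεdet]; ring

lemma sep_functional {ι : Type*} [Fintype ι] {r : ℕ} (W : Submodule ℝ (ι → ℝ))
    (v : Fin r → (ι → ℝ)) (hv : ∀ i, v i ∉ W) :
    ∃ ψ : (ι → ℝ) →ₗ[ℝ] ℝ, (∀ w ∈ W, ψ w = 0) ∧ ∀ i, ψ (v i) ≠ 0 := by
  classical
  suffices h : ∀ s : Finset (Fin r), ∃ ψ : (ι → ℝ) →ₗ[ℝ] ℝ,
      (∀ w ∈ W, ψ w = 0) ∧ ∀ i ∈ s, ψ (v i) ≠ 0 by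
    obtain ⟨ψ, h1, h2⟩ := h Finset.univ
    exact ⟨ψ, h1, fun i => h2 i (Finset.mem_univ i)⟩
  intro s
  induction s using Finset.induction_on with
  | empty => exact ⟨0, by simp, by simp⟩
  | @insert a s ha ih =>
    obtain ⟨ψ, hψW, hψs⟩ := ih
    obtain ⟨φ, hφ0, hφmap⟩ := Submodule.exists_dual_map_eq_bot_of_notMem (hv a) inferInstance
    have hφW : ∀ w ∈ W, φ w = 0 := by
      intro w hw
      have h2 : φ w ∈ W.map φ := ⟨w, hw, rfl⟩
      rw [hφmap] at h2; simpa using h2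
    set bad : Finset ℝ :=
      (insert a s).image (fun i => if φ (v i) = 0 then 0 else -ψ (v i) / φ (v i)) with hbad
    obtain ⟨cc, hcc⟩ := Infinite.exists_notMem_finset bad
    refine ⟨ψ + cc • φ, ?_, ?_⟩
    · intro w hw
      simp [hψW w hw, hφW w hw]
    · intro i hi
      simp only [LinearMap.add_apply, LinearMap.smul_apply, smul_eq_mul]
      by_cases hφi : φ (v i) = 0
      · have hia : i ≠ a := fun h => hφ0 (h ▸ hφi)
        have his : i ∈ s := by
          rcases Finset.mem_insert.mp hi with h | h
          · exact absurd h hia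
          · exact h
        simp [hφi, hψs i his]
      · intro hzero
        apply hcc
        rw [hbad]
        refine Finset.mem_image.mpr ⟨i, hi, ?_⟩
        rw [if_neg hφi]
        field_simp
        linarith
lemma sum_powerset_decomp {α G : Type*} [Fintype α] [DecidableEq α] [AddCommMonoid G]
    (V : Finset α) (f : Finset α → G) :
    (∑ S' : Finset α, f S') = ∑ p ∈ V.powerset ×ˢ Vᶜ.powerset, f (p.1 ∪ p.2) := by
  refine Finset.sum_nbij' (i := fun S' => (S' ∩ V, S' \ V)) (j := fun p => p.1 ∪ p.2)
    ?_ ?_ ?_ ?_ ?_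
  · intro S' _
    simp only [Finset.mem_product, Finset.mem_powerset]
    exact ⟨Finset.inter_subset_right, fun a ha =>
      Finset.mem_compl.mpr (Finset.mem_sdiff.mp ha).2⟩
  · intro p _; exact Finset.mem_univ _
  · intro S' _
    ext a
    simp only [Finset.mem_union, Finset.mem_inter, Finset.mem_sdiff]
    tauto
  · rintro ⟨S, T⟩ hp
    simp only [Finset.mem_product, Finset.mem_powerset] at hp
    have hTV : ∀ a ∈ T, a ∉ V := fun a ha => Finset.mem_compl.mp (hp.2 ha)
    have h1 : (S ∪ T) ∩ V = S := by
      ext a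
      simp only [Finset.mem_inter, Finset.mem_union]
      constructor
      · rintro ⟨h2 | h2, h3⟩
        · exact h2
        · exact absurd h3 (hTV a h2)
      · intro h2; exact ⟨Or.inl h2, hp.1 h2⟩
    have h2 : (S ∪ T) \ V = T := by
      ext a
      simp only [Finset.mem_sdiff, Finset.mem_union]
      constructor
      · rintro ⟨h2 | h2, h3⟩
        · exact absurd (hp.1 h2) h3
        · exact h2
      · intro h2; exact ⟨Or.inr h2, hTV a h2⟩
    simp [h1, h2]
  · intro S' _
    congr 1
    ext a
    simp only [Finset.mem_union, Finset.mem_inter, Finset.mem_sdiff]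
    tauto

set_option maxHeartbeats 1600000 in
/-- Transfer of zero bounds from ℝ to Abelian groups without small-order elements:
if every real degree-`≤d` multilinear polynomial with `r` pairwise-disjoint non-zero
degree-`d` monomials has at most `c·2ⁿ` zeros in `{0,1}ⁿ`, then the same holds for
polynomials over any Abelian group `G` in which every non-zero element has order
greater than `(Σ_{i≤d} C(rd, i))!`. -/
theorem stmt15 (n d r : ℕ) (hd : 0 < d) (hr : 0 < r) (c : ℝ)
    (hreal : ∀ P : Finset (Fin n) → ℝ,
      (∀ S : Finset (Fin n), d < S.card → P S = 0) →
      (∃ M : Fin r → Finset (Fin n),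
        (∀ i, (M i).card = d ∧ P (M i) ≠ 0) ∧
        (∀ i j, i ≠ j → Disjoint (M i) (M j))) →
      ((Finset.univ.filter (fun x : Fin n → Bool => evalPoly P x = 0)).card : ℝ)
        ≤ c * 2 ^ n)
    (G : Type u) [AddCommGroup G]
    (hG : ∀ g : G, g ≠ 0 → ∀ m : ℕ, 0 < m →
      m ≤ (∑ i ∈ Finset.range (d + 1), (r * d).choose i).factorial → m • g ≠ 0)
    (Q : Finset (Fin n) → G)
    (hQdeg : ∀ S : Finset (Fin n), d < S.card → Q S = 0)
    (hQM : ∃ M : Fin r → Finset (Fin n),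
      (∀ i, (M i).card = d ∧ Q (M i) ≠ 0) ∧
      (∀ i j, i ≠ j → Disjoint (M i) (M j))) :
    ((Finset.univ.filter (fun x : Fin n → Bool => evalPoly Q x = 0)).card : ℝ)
      ≤ c * 2 ^ n := by
  classical
  obtain ⟨M, hM1, hM2⟩ := hQM
  set t : ℕ := ∑ i ∈ Finset.range (d + 1), (r * d).choose i with ht
  set V : Finset (Fin n) := Finset.univ.biUnion M with hV
  have hMsubV : ∀ i, M i ⊆ V := fun i => Finset.subset_biUnion_of_mem M (Finset.mem_univ i)
  have hVcard : V.card = r * d := by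
    rw [hV, Finset.card_biUnion (fun i _ j _ hij => hM2 i j hij)]
    rw [Finset.sum_congr rfl (fun i _ => (hM1 i).1)]
    simp [Finset.card_univ, mul_comm]
  set 𝒮 : Finset (Finset (Fin n)) := V.powerset.filter (fun S => S.card ≤ d) with h𝒮
  have h𝒮sub : 𝒮 ⊆ V.powerset := Finset.filter_subset _ _
  have h𝒮card : 𝒮.card = t := by
    have hrw : 𝒮 = (Finset.range (d+1)).biUnion (fun i => Finset.powersetCard i V) := by
      ext S
      simp only [h𝒮, Finset.mem_filter, Finset.mem_powerset, Finset.mem_biUnion,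
        Finset.mem_range, Finset.mem_powersetCard, Nat.lt_succ_iff]
      constructor
      · rintro ⟨h1, h2⟩; exact ⟨S.card, h2, h1, rfl⟩
      · rintro ⟨i, hi, h1, h2⟩; exact ⟨h1, h2 ▸ hi⟩
    rw [hrw, Finset.card_biUnion, ht]
    · exact Finset.sum_congr rfl fun i _ => by rw [Finset.card_powersetCard, hVcard]
    · intro i hi j hj hij
      simp only [Finset.disjoint_left, Finset.mem_powersetCard]
      rintro S ⟨_, h1⟩ ⟨_, h2⟩
      exact hij (h1 ▸ h2)
  have hMi𝒮 : ∀ i, M i ∈ 𝒮 := fun i => by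
    rw [h𝒮, Finset.mem_filter, Finset.mem_powerset]
    exact ⟨hMsubV i, le_of_eq (hM1 i).1⟩
  have hcard𝒮 : Fintype.card ↥𝒮 = t := by rw [Fintype.card_coe, h𝒮card]
  set proj : (Fin n → Bool) → (Fin n → Bool) :=
    fun x i => if i ∈ V then false else x i with hproj
  set Z : Finset (Fin n → Bool) :=
    Finset.univ.filter (fun x => evalPoly Q x = 0) with hZ
  set Qres : (Fin n → Bool) → Finset (Fin n) → G :=
    fun y S => ∑ T ∈ Vᶜ.powerset.filter (fun T => ∀ i ∈ T, y i = true), Q (S ∪ T) with hQres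
  have hF1 : ∀ x : Fin n → Bool,
      evalPoly Q x = ∑ S ∈ 𝒮, (if ∀ i ∈ S, x i = true then Qres (proj x) S else 0) := by
    intro x
    rw [evalPoly, sum_powerset_decomp V (fun S' => if ∀ i ∈ S', x i = true then Q S' else 0),
      Finset.sum_product]
    have hsplit : ∀ S ∈ V.powerset,
        (∑ T ∈ Vᶜ.powerset, if ∀ i ∈ S ∪ T, x i = true then Q (S ∪ T) else 0)
        = if ∀ i ∈ S, x i = true then Qres (proj x) S else 0 := by
      intro S hS
      by_cases hSx : ∀ i ∈ S, x i = true
      · rw [if_pos hSx]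
        simp only [hQres]
        rw [Finset.sum_filter]
        refine Finset.sum_congr rfl fun T hT => ?_
        have hTV : ∀ a ∈ T, a ∉ V := fun a ha =>
          Finset.mem_compl.mp (Finset.mem_powerset.mp hT ha)
        have hiff : (∀ i ∈ S ∪ T, x i = true) ↔ (∀ i ∈ T, proj x i = true) := by
          constructor
          · intro h i hi
            have h3 : proj x i = x i := by
              simp only [hproj]; exact if_neg (hTV i hi)
            rw [h3]
            exact h i (Finset.mem_union_right _ hi)
          · intro h i hi
            rcases Finset.mem_union.mp hi with h' | h'
            · exact hSx i h'
            · have h3 : proj x i = x i := by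
                simp only [hproj]; exact if_neg (hTV i h')
              rw [← h3]
              exact h i h'
        rw [if_congr hiff rfl rfl]
      · rw [if_neg hSx]
        refine Finset.sum_eq_zero fun T hT => ?_
        rw [if_neg]
        intro hall; exact hSx fun i hi => hall i (Finset.mem_union_left _ hi)
    rw [Finset.sum_congr rfl hsplit]
    refine (Finset.sum_subset h𝒮sub fun S hS hSn => ?_).symm
    have hcard : d < S.card := by
      by_contra h'
      exact hSn (Finset.mem_filter.mpr ⟨hS, not_lt.mp h'⟩)
    have hq : Qres (proj x) S = 0 := by
      simp only [hQres]
      exact Finset.sum_eq_zero fun T hT => hQdeg _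
        (lt_of_lt_of_le hcard (Finset.card_le_card Finset.subset_union_left))
    simp [hq]
  have hF2 : ∀ (y : Fin n → Bool) i, Qres y (M i) = Q (M i) := by
    intro y i
    simp only [hQres]
    rw [Finset.sum_eq_single_of_mem ∅ ?_ ?_]
    · rw [Finset.union_empty]
    · rw [Finset.mem_filter, Finset.mem_powerset]
      exact ⟨Finset.empty_subset _, by simp⟩
    · intro T hT hTne
      apply hQdeg
      rw [Finset.mem_filter, Finset.mem_powerset] at hT
      have hdisj : Disjoint (M i) T := by
        rw [Finset.disjoint_left]
        intro a haM haT
        exact (Finset.mem_compl.mp (hT.1 haT)) (hMsubV i haM)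
      rw [Finset.card_union_of_disjoint hdisj, (hM1 i).1]
      have h3 : 0 < T.card := Finset.card_pos.mpr (Finset.nonempty_iff_ne_empty.mpr hTne)
      omega
  -- construction of the real polynomial for each fiber
  have hkey : ∀ y : Fin n → Bool, ∃ P : Finset (Fin n) → ℝ,
      (∀ S, d < S.card → P S = 0) ∧ (∀ i, P (M i) ≠ 0) ∧
      (∀ z : Fin n → Bool, ∀ x ∈ Z.filter (fun x' => proj x' = y),
        (∀ i ∈ V, z i = x i) → evalPoly P z = 0) := by
    intro y
    set Fib : Finset (Fin n → Bool) := Z.filter (fun x' => proj x' = y) with hFib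
    set uu : ↥Fib → ↥𝒮 → ℤ :=
      fun k S => if ∀ i ∈ S.1, k.1 i = true then 1 else 0 with huu
    have h01 : ∀ k S, uu k S = 0 ∨ uu k S = 1 := by
      intro k S; simp only [huu]; split
      · exact Or.inr rfl
      · exact Or.inl rfl
    set ee : Fin r → ↥𝒮 → ℤ := fun i S => if S.1 = M i then 1 else 0 with hee
    have hGsum : ∀ k : ↥Fib, ∑ S : ↥𝒮, uu k S • Qres y S.1 = 0 := by
      intro k
      obtain ⟨hkZ, hkproj⟩ := Finset.mem_filter.mp k.2
      have h0 : evalPoly Q k.1 = 0 := (Finset.mem_filter.mp hkZ).2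
      rw [hF1 k.1, hkproj] at h0
      rw [← h0, Finset.univ_eq_attach,
        ← Finset.sum_attach 𝒮 (fun S => if ∀ i ∈ S, k.1 i = true then Qres y S else 0)]
      refine Finset.sum_congr rfl fun S _ => ?_
      simp only [huu]
      split
      · rw [one_smul]
      · rw [zero_smul]
    have hGe : ∀ i, ∑ S : ↥𝒮, ee i S • Qres y S.1 = Q (M i) := by
      intro i
      have h1 : ∑ S : ↥𝒮, ee i S • Qres y S.1 = ∑ S ∈ 𝒮, if S = M i then Qres y S else 0 := by
        rw [Finset.univ_eq_attach,
          ← Finset.sum_attach 𝒮 (fun S => if S = M i then Qres y S else 0)]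
        refine Finset.sum_congr rfl fun S _ => ?_
        simp only [hee]
        by_cases h' : S.1 = M i
        · rw [if_pos h', if_pos h', one_smul]
        · rw [if_neg h', if_neg h', zero_smul]
      rw [h1, Finset.sum_ite_eq' 𝒮 (M i) (fun S => Qres y S), if_pos (hMi𝒮 i), hF2 y i]
    have hC1 : ∀ i, (fun S : ↥𝒮 => ((ee i S : ℤ) : ℝ)) ∉
        Submodule.span ℝ (Set.range fun k : ↥Fib => fun S : ↥𝒮 => ((uu k S : ℤ) : ℝ)) := by
      intro i hmem
      obtain ⟨N, m, hN0, hNle, hcomb⟩ := int_combination uu h01 (ee i) hmem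
      have hA : (0 : G) = (N : ℤ) • Q (M i) := by
        calc (0 : G) = ∑ k : ↥Fib, m k • (∑ S : ↥𝒮, uu k S • Qres y S.1) := by
              simp only [hGsum, smul_zero, Finset.sum_const_zero]
          _ = ∑ S : ↥𝒮, (∑ k : ↥Fib, m k * uu k S) • Qres y S.1 := by
              simp only [Finset.smul_sum, smul_smul]
              rw [Finset.sum_comm]
              exact Finset.sum_congr rfl fun S _ => (Finset.sum_smul).symm
          _ = ∑ S : ↥𝒮, ((N : ℤ) * ee i S) • Qres y S.1 :=
              Finset.sum_congr rfl fun S _ => by rw [hcomb S]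
          _ = (N : ℤ) • ∑ S : ↥𝒮, ee i S • Qres y S.1 := by
              rw [Finset.smul_sum]
              exact Finset.sum_congr rfl fun S _ => (mul_smul _ _ _)
          _ = (N : ℤ) • Q (M i) := by rw [hGe i]
      have hle : N ≤ t.factorial := by
        calc N ≤ (Fintype.card ↥𝒮).factorial := hNle
          _ = t.factorial := by rw [hcard𝒮]
      refine hG (Q (M i)) (hM1 i).2 N hN0 hle ?_
      rw [← natCast_zsmul]
      exact hA.symm
    obtain ⟨ψ, hψW, hψv⟩ := sep_functional
      (Submodule.span ℝ (Set.range fun k : ↥Fib => fun S : ↥𝒮 => ((uu k S : ℤ) : ℝ)))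
      (fun i => fun S : ↥𝒮 => ((ee i S : ℤ) : ℝ)) hC1
    have hψu : ∀ k : ↥Fib, ψ (fun S : ↥𝒮 => ((uu k S : ℤ) : ℝ)) = 0 :=
      fun k => hψW _ (Submodule.subset_span ⟨k, rfl⟩)
    set P : Finset (Fin n) → ℝ := fun S =>
      if h : S ∈ 𝒮 then ψ (fun S' : ↥𝒮 => if S' = ⟨S, h⟩ then 1 else 0) else 0 with hP
    have hψsum : ∀ v : ↥𝒮 → ℝ,
        ψ v = ∑ S' : ↥𝒮, v S' * ψ (fun S'' => if S'' = S' then 1 else 0) := by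
      intro v
      have hv : v = ∑ S' : ↥𝒮, v S' • (fun S'' => if S'' = S' then (1:ℝ) else 0) := by
        funext S''
        rw [Finset.sum_apply]
        simp only [Pi.smul_apply, smul_eq_mul, mul_ite, mul_one, mul_zero]
        simp
      conv_lhs => rw [hv]
      rw [map_sum]
      exact Finset.sum_congr rfl fun S' _ => by rw [_root_.map_smul, smul_eq_mul]
    have hPM : ∀ i, P (M i) = ψ (fun S : ↥𝒮 => ((ee i S : ℤ) : ℝ)) := by
      intro i
      simp only [hP]
      rw [dif_pos (hMi𝒮 i)]
      congr 1
      funext S'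
      simp only [hee]
      by_cases h' : S'.1 = M i
      · simp [Subtype.ext_iff, h']
      · simp [Subtype.ext_iff, h']
    have hPne : ∀ i, P (M i) ≠ 0 := fun i => by rw [hPM i]; exact hψv i
    have hPdeg : ∀ S, d < S.card → P S = 0 := by
      intro S hS
      simp only [hP]
      rw [dif_neg]
      intro hmem
      rw [h𝒮, Finset.mem_filter] at hmem
      exact absurd hmem.2 (not_le.mpr hS)
    refine ⟨P, hPdeg, hPne, ?_⟩
    intro z x hx hagree
    have hEP : evalPoly P z = ψ (fun S : ↥𝒮 => if ∀ i ∈ S.1, z i = true then 1 else 0) := by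
      rw [evalPoly]
      have h1 : ∑ S' : Finset (Fin n), (if ∀ i ∈ S', z i = true then P S' else 0)
          = ∑ S' ∈ 𝒮, (if ∀ i ∈ S', z i = true then P S' else 0) := by
        refine (Finset.sum_subset (Finset.subset_univ 𝒮) fun S' _ hS' => ?_).symm
        have h2 : P S' = 0 := by simp only [hP]; exact dif_neg hS'
        simp [h2]
      rw [h1, ← Finset.sum_attach 𝒮 (fun S' => if ∀ i ∈ S', z i = true then P S' else 0),
        hψsum]
      rw [Finset.univ_eq_attach]
      refine Finset.sum_congr rfl fun S' _ => ?_
      have hPS : P S'.1 = ψ (fun S'' => if S'' = S' then 1 else 0) := by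
        simp only [hP]
        rw [dif_pos S'.2]
      split
      · rw [hPS, one_mul]
      · rw [zero_mul]
    rw [hEP]
    have harg : (fun S : ↥𝒮 => if ∀ i ∈ S.1, z i = true then (1:ℝ) else 0)
        = (fun S : ↥𝒮 => ((uu ⟨x, hx⟩ S : ℤ) : ℝ)) := by
      funext S
      have hSV : S.1 ⊆ V := Finset.mem_powerset.mp (h𝒮sub S.2)
      have hiff : (∀ i ∈ S.1, z i = true) ↔ (∀ i ∈ S.1, x i = true) := by
        constructor <;> intro h i hi
        · rw [← hagree i (hSV hi)]; exact h i hi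
        · rw [hagree i (hSV hi)]; exact h i hi
      simp only [huu]
      rw [if_congr hiff rfl rfl]
      split
      · simp
      · simp
    rw [harg]
    exact hψu ⟨x, hx⟩
  -- fiberwise counting
  have hfib : ∀ y : Fin n → Bool,
      ((Z.filter (fun x => proj x = y)).card : ℝ) * 2 ^ (n - r * d) ≤ c * 2 ^ n := by
    intro y
    obtain ⟨P, hPdeg, hPne, hPzero⟩ := hkey y
    have hPcount := hreal P hPdeg ⟨M, fun i => ⟨(hM1 i).1, hPne i⟩, hM2⟩
    have hinj : (Z.filter (fun x => proj x = y)).card * 2 ^ (n - r * d) ≤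
        (Finset.univ.filter (fun z : Fin n → Bool => evalPoly P z = 0)).card := by
      have hcard1 : ((Z.filter (fun x => proj x = y)) ×ˢ Vᶜ.powerset).card
          = (Z.filter (fun x => proj x = y)).card * 2 ^ (n - r * d) := by
        rw [Finset.card_product, Finset.card_powerset, Finset.card_compl, hVcard,
          Fintype.card_fin]
      rw [← hcard1]
      apply Finset.card_le_card_of_injOn
        (fun p => fun i => if i ∈ V then p.1 i else decide (i ∈ p.2))
      · rintro ⟨x, T⟩ hp
        rw [Finset.mem_coe, Finset.mem_product] at hp
        rw [Finset.mem_coe, Finset.mem_filter]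
        refine ⟨Finset.mem_univ _, ?_⟩
        exact hPzero _ x hp.1 (fun i hi => by simp [if_pos hi])
      · rintro ⟨x, T⟩ hp ⟨x', T'⟩ hp' heq
        simp only [Finset.coe_product, Set.mem_prod, Finset.mem_coe, Finset.mem_filter,
          Finset.mem_powerset] at hp hp'
        have hxy : ∀ i, i ∉ V → x i = y i := by
          intro i hi
          have h2 := congrFun hp.1.2 i
          simp only [hproj] at h2
          rwa [if_neg hi] at h2
        have hx'y : ∀ i, i ∉ V → x' i = y i := by
          intro i hi
          have h2 := congrFun hp'.1.2 i
          simp only [hproj] at h2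
          rwa [if_neg hi] at h2
        have hxx' : x = x' := by
          funext i
          by_cases hi : i ∈ V
          · have h2 := congrFun heq i
            simpa [if_pos hi] using h2
          · rw [hxy i hi, hx'y i hi]
        have hTT' : T = T' := by
          ext i
          by_cases hi : i ∈ V
          · have h1 : i ∉ T := fun h => Finset.mem_compl.mp (hp.2 h) hi
            have h2 : i ∉ T' := fun h => Finset.mem_compl.mp (hp'.2 h) hi
            simp [h1, h2]
          · have h2 := congrFun heq i
            simp only [if_neg hi] at h2
            rw [decide_eq_decide] at h2
            exact h2
        simp [hxx', hTT']
    calc ((Z.filter (fun x => proj x = y)).card : ℝ) * 2 ^ (n - r * d)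
        = (((Z.filter (fun x => proj x = y)).card * 2 ^ (n - r * d) : ℕ) : ℝ) := by
          push_cast; ring
      _ ≤ ((Finset.univ.filter (fun z : Fin n → Bool => evalPoly P z = 0)).card : ℝ) := by
          exact_mod_cast hinj
      _ ≤ c * 2 ^ n := hPcount
  have hc0 : (0:ℝ) ≤ c * 2 ^ n := by
    have h2 := hreal (fun S => if S.card = d then (1:ℝ) else 0) ?_ ?_
    · exact le_trans (Nat.cast_nonneg _) h2
    · intro S hS
      have h4 : S.card ≠ d := by omega
      simp only [h4, if_false]
    · exact ⟨M, fun i => ⟨(hM1 i).1, by simp only [(hM1 i).1, if_true]; norm_num⟩, hM2⟩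
  have himg : (Z.image proj).card ≤ 2 ^ (n - r * d) := by
    have h3 : (Z.image proj).card ≤ Vᶜ.powerset.card := by
      apply Finset.card_le_card_of_injOn (fun y => Vᶜ.filter (fun i => y i = true))
      · intro y _; exact Finset.mem_powerset.mpr (Finset.filter_subset _ _)
      · intro y hy y' hy' heq
        simp only [Finset.coe_image, Set.mem_image, Finset.mem_coe] at hy hy'
        obtain ⟨x, hxZ, hxy⟩ := hy
        obtain ⟨x', hx'Z, hx'y⟩ := hy'
        have hyV : ∀ i ∈ V, y i = false := fun i hi => by
          rw [← hxy]; simp only [hproj]; rw [if_pos hi]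
        have hy'V : ∀ i ∈ V, y' i = false := fun i hi => by
          rw [← hx'y]; simp only [hproj]; rw [if_pos hi]
        funext i
        by_cases hi : i ∈ V
        · rw [hyV i hi, hy'V i hi]
        · have h1 := Finset.ext_iff.mp heq i
          simp only [Finset.mem_filter, Finset.mem_compl] at h1
          rw [Bool.eq_iff_iff]
          constructor
          · intro h; exact (h1.mp ⟨hi, h⟩).2
          · intro h; exact (h1.mpr ⟨hi, h⟩).2
    calc (Z.image proj).card ≤ Vᶜ.powerset.card := h3
      _ = 2 ^ (n - r * d) := by
          rw [Finset.card_powerset, Finset.card_compl, hVcard, Fintype.card_fin]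
  have hZcard : Z.card = ∑ y ∈ Z.image proj, (Z.filter (fun x => proj x = y)).card :=
    Finset.card_eq_sum_card_fiberwise (fun x hx => Finset.mem_image_of_mem proj hx)
  have hfinal : (Z.card : ℝ) * 2 ^ (n - r * d) ≤ (2 ^ (n - r * d) : ℝ) * (c * 2 ^ n) := by
    rw [hZcard]
    push_cast
    rw [Finset.sum_mul]
    calc ∑ y ∈ Z.image proj, ((Z.filter (fun x => proj x = y)).card : ℝ) * 2 ^ (n - r * d)
        ≤ ∑ _y ∈ Z.image proj, c * 2 ^ n := Finset.sum_le_sum fun y _ => hfib y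
      _ = (Z.image proj).card * (c * 2 ^ n) := by rw [Finset.sum_const, nsmul_eq_mul]
      _ ≤ (2 ^ (n - r * d) : ℝ) * (c * 2 ^ n) := by
          refine mul_le_mul_of_nonneg_right ?_ hc0
          exact_mod_cast himg
  have h2pos : (0:ℝ) < 2 ^ (n - r * d) := by positivity
  have hfinal' : (Z.card : ℝ) * 2 ^ (n - r * d) ≤ (c * 2 ^ n) * 2 ^ (n - r * d) := by
    calc (Z.card : ℝ) * 2 ^ (n - r * d) ≤ (2 ^ (n - r * d) : ℝ) * (c * 2 ^ n) := hfinal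
      _ = (c * 2 ^ n) * 2 ^ (n - r * d) := by ring
  exact le_of_mul_le_mul_right hfinal' h2pos
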